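/- There exists ν₊ > 0 such that for every ν ∈ (0, ν₊] there exist unique points u₊ ∈ B_ν⁺ and u₋ ∈ B_ν⁻ with F_ν(u₊) = 0 and F_ν(u₋) = 0; moreover every solution z of z' = F_ν(z) defined on [0, ∞) with z(0) ∈ B_ν⁺ converges to u₊ as t → ∞, and every solution starting in B_ν⁻ converges to u₋ as t → ∞. -/

import Mathlib

open Set

/-- The planar vector field `F_ν(x, y) = (x(ν − x²) + x³y + xy², −y + x²y + x⁴)`. -/
noncomputable def F (ν : ℝ) (p : ℝ × ℝ) : ℝ × ℝ :=
  (p.1 * (ν - p.1 ^ 2) + p.1 ^ 3 * p.2 + p.1 * p.2 ^ 2,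
   -p.2 + p.1 ^ 2 * p.2 + p.1 ^ 4)

/-- The box `B_θ = [−√(2θ), √(2θ)] × [−θ, θ]`. -/
noncomputable def B (θ : ℝ) : Set (ℝ × ℝ) :=
  Icc (-Real.sqrt (2 * θ)) (Real.sqrt (2 * θ)) ×ˢ Icc (-θ) θ

/-- The box `B_ν⁺ = [√(ν/2), √(2ν)] × [−ν, ν]`. -/
noncomputable def Bp (ν : ℝ) : Set (ℝ × ℝ) :=
  Icc (Real.sqrt (ν / 2)) (Real.sqrt (2 * ν)) ×ˢ Icc (-ν) ν

/-- The box `B_ν⁻ = [−√(2ν), −√(ν/2)] × [−ν, ν]`. -/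
noncomputable def Bm (ν : ℝ) : Set (ℝ × ℝ) :=
  Icc (-Real.sqrt (2 * ν)) (-Real.sqrt (ν / 2)) ×ˢ Icc (-ν) ν

open Filter

lemma quadform (ν s d P Q a b : ℝ) (hν : 0 < ν) (hν' : ν ≤ 1/100)
    (hPle : P ≤ -(2/5) * ν) (hQle : Q ≤ -(98/100))
    (ha2 : a^2 ≤ 50 * ν^3) (hb2 : b^2 ≤ 162 * ν^3) :
    P * s^2 + Q * d^2 + (a + b) * (s * d) ≤ -(ν/8) * (s^2 + d^2) := by
  have hcross_a : a * (s * d) ≤ ν/10 * s^2 + 125 * ν^2 * d^2 := by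
    have h10 : (0:ℝ) < 10 * ν := by linarith
    rw [← mul_le_mul_iff_right₀ h10]
    nlinarith [sq_nonneg (ν * s - 5 * a * d), mul_nonneg (sub_nonneg.2 ha2) (sq_nonneg d)]
  have hcross_b : b * (s * d) ≤ ν/10 * s^2 + 405 * ν^2 * d^2 := by
    have h10 : (0:ℝ) < 10 * ν := by linarith
    rw [← mul_le_mul_iff_right₀ h10]
    nlinarith [sq_nonneg (ν * s - 5 * b * d), mul_nonneg (sub_nonneg.2 hb2) (sq_nonneg d)]
  have hPs : P * s^2 ≤ -(2/5) * ν * s^2 := mul_le_mul_of_nonneg_right hPle (sq_nonneg s)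
  have hQd : Q * d^2 ≤ -(98/100) * d^2 := mul_le_mul_of_nonneg_right hQle (sq_nonneg d)
  have hνs : 0 ≤ ν * s^2 := mul_nonneg hν.le (sq_nonneg s)
  have hνd : 0 ≤ ν * d^2 := mul_nonneg hν.le (sq_nonneg d)
  have hν2d : ν^2 * d^2 ≤ (1/100) * (ν * d^2) := by
    nlinarith [mul_nonneg (show (0:ℝ) ≤ 1/100 - ν by linarith) hνd]
  have hνd' : ν * d^2 ≤ (1/100) * d^2 := mul_le_mul_of_nonneg_right hν' (sq_nonneg d)
  nlinarith [hPs, hQd, hcross_a, hcross_b, hνs, hνd, hν2d, hνd']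

set_option maxHeartbeats 1000000 in
/-- Key contraction inequality in coordinates. -/
lemma key (ν x₁ y₁ x₂ y₂ : ℝ) (hν : 0 < ν) (hν' : ν ≤ 1/100)
    (h1 : ν/2 ≤ x₁^2) (h2 : x₁^2 ≤ 2*ν) (h3 : -ν ≤ y₁) (h3' : y₁ ≤ ν)
    (h4 : ν/2 ≤ x₂^2) (h5 : x₂^2 ≤ 2*ν) (h6 : -ν ≤ y₂) (h6' : y₂ ≤ ν)
    (hx1 : 0 < x₁) (hx2 : 0 < x₂) :
    ((x₁ * (ν - x₁ ^ 2) + x₁ ^ 3 * y₁ + x₁ * y₁ ^ 2)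
      - (x₂ * (ν - x₂ ^ 2) + x₂ ^ 3 * y₂ + x₂ * y₂ ^ 2)) * (x₁ - x₂)
    + ((-y₁ + x₁ ^ 2 * y₁ + x₁ ^ 4) - (-y₂ + x₂ ^ 2 * y₂ + x₂ ^ 4)) * (y₁ - y₂)
    ≤ -(ν/8) * ((x₁ - x₂)^2 + (y₁ - y₂)^2) := by
  have hx12l : ν/2 ≤ x₁ * x₂ := by nlinarith [mul_pos hx1 hx2]
  have hx12u : x₁ * x₂ ≤ 2*ν := by nlinarith [mul_pos hx1 hx2]
  have ha2 : (x₁ * (y₁ + x₁^2 + x₁*x₂))^2 ≤ 50 * ν^3 := by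
    have hGl : (0:ℝ) ≤ y₁ + x₁^2 + x₁*x₂ := by linarith
    have hGu : y₁ + x₁^2 + x₁*x₂ ≤ 5*ν := by linarith
    have hGsq : (y₁ + x₁^2 + x₁*x₂)^2 ≤ 25 * ν^2 := by nlinarith
    calc (x₁ * (y₁ + x₁^2 + x₁*x₂))^2 = x₁^2 * (y₁ + x₁^2 + x₁*x₂)^2 := by ring
    _ ≤ (2*ν) * (25*ν^2) := mul_le_mul h2 hGsq (sq_nonneg _) (by positivity)
    _ = 50 * ν^3 := by ring
  have hb2 : (x₂ * (2*x₂^2 + 2*y₁ + y₂ + x₁*x₂))^2 ≤ 162 * ν^3 := by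
    have hGl : (-(7:ℝ)*ν) ≤ 2*x₂^2 + 2*y₁ + y₂ + x₁*x₂ := by linarith
    have hGu : 2*x₂^2 + 2*y₁ + y₂ + x₁*x₂ ≤ 9*ν := by linarith
    have hGsq : (2*x₂^2 + 2*y₁ + y₂ + x₁*x₂)^2 ≤ 81 * ν^2 := by nlinarith
    calc (x₂ * (2*x₂^2 + 2*y₁ + y₂ + x₁*x₂))^2 = x₂^2 * (2*x₂^2 + 2*y₁ + y₂ + x₁*x₂)^2 := by ring
    _ ≤ (2*ν) * (81*ν^2) := mul_le_mul h5 hGsq (sq_nonneg _) (by positivity)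
    _ = 162 * ν^3 := by ring
  have hPle : ν - (x₁^2 + x₁*x₂ + x₂^2) * (1 - y₁) + y₁^2 ≤ -(2/5) * ν := by nlinarith
  have hQle : (-1 : ℝ) + x₂^2 ≤ -(98/100) := by linarith
  have := quadform ν (x₁ - x₂) (y₁ - y₂) (ν - (x₁^2 + x₁*x₂ + x₂^2) * (1 - y₁) + y₁^2)
    (-1 + x₂^2) (x₁ * (y₁ + x₁^2 + x₁*x₂)) (x₂ * (2*x₂^2 + 2*y₁ + y₂ + x₁*x₂))
    hν hν' hPle hQle ha2 hb2
  have hdec : ((x₁ * (ν - x₁ ^ 2) + x₁ ^ 3 * y₁ + x₁ * y₁ ^ 2)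
      - (x₂ * (ν - x₂ ^ 2) + x₂ ^ 3 * y₂ + x₂ * y₂ ^ 2)) * (x₁ - x₂)
    + ((-y₁ + x₁ ^ 2 * y₁ + x₁ ^ 4) - (-y₂ + x₂ ^ 2 * y₂ + x₂ ^ 4)) * (y₁ - y₂)
      = (ν - (x₁^2 + x₁*x₂ + x₂^2) * (1 - y₁) + y₁^2) * (x₁ - x₂)^2
        + (-1 + x₂^2) * (y₁ - y₂)^2
        + (x₁ * (y₁ + x₁^2 + x₁*x₂) + x₂ * (2*x₂^2 + 2*y₁ + y₂ + x₁*x₂)) * ((x₁ - x₂) * (y₁ - y₂)) := by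
    ring
  rw [hdec]
  exact this

lemma bp_facts {ν : ℝ} (hν : 0 < ν) {p : ℝ × ℝ} (hp : p ∈ Bp ν) :
    0 < p.1 ∧ ν/2 ≤ p.1^2 ∧ p.1^2 ≤ 2*ν ∧ -ν ≤ p.2 ∧ p.2 ≤ ν := by
  obtain ⟨⟨hx1, hx2⟩, hy1, hy2⟩ := hp
  have h2 : (0:ℝ) < ν/2 := by linarith
  have hs : 0 < Real.sqrt (ν/2) := Real.sqrt_pos.2 h2
  have hxpos : 0 < p.1 := lt_of_lt_of_le hs hx1
  refine ⟨hxpos, ?_, ?_, hy1, hy2⟩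
  · calc ν/2 = Real.sqrt (ν/2)^2 := (Real.sq_sqrt h2.le).symm
    _ ≤ p.1^2 := pow_le_pow_left₀ (Real.sqrt_nonneg _) hx1 2
  · calc p.1^2 ≤ Real.sqrt (2*ν)^2 := pow_le_pow_left₀ hxpos.le hx2 2
    _ = 2*ν := Real.sq_sqrt (by linarith)

lemma mem_bp {ν x y : ℝ} (hν : 0 < ν) (h1 : ν/2 ≤ x^2) (h2 : x^2 ≤ 2*ν)
    (hx : 0 ≤ x) (h3 : -ν ≤ y) (h4 : y ≤ ν) : (x, y) ∈ Bp ν := by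
  refine ⟨⟨?_, ?_⟩, h3, h4⟩
  · calc Real.sqrt (ν/2) ≤ Real.sqrt (x^2) := Real.sqrt_le_sqrt h1
    _ = x := Real.sqrt_sq hx
  · calc x = Real.sqrt (x^2) := (Real.sqrt_sq hx).symm
    _ ≤ Real.sqrt (2*ν) := Real.sqrt_le_sqrt h2

/-- Existence of the equilibrium in Bp. -/
lemma equil_exists {ν : ℝ} (hν : 0 < ν) (hν' : ν ≤ 1/100) :
    ∃ u ∈ Bp ν, F ν u = (0, 0) := by
  set p : ℝ → ℝ := fun u => u*(1-u)^2 - u^3*(1-u) - u^4 - ν*(1-u)^2 with hp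
  set g : ℝ → ℝ := fun x => p (x^2) with hgdef
  have hcont : ContinuousOn g (Icc (Real.sqrt (ν/2)) (Real.sqrt (2*ν))) := by
    apply Continuous.continuousOn
    simp only [hgdef, hp]
    fun_prop
  have hle : Real.sqrt (ν/2) ≤ Real.sqrt (2*ν) := Real.sqrt_le_sqrt (by linarith)
  have ha : Real.sqrt (ν/2)^2 = ν/2 := Real.sq_sqrt (by linarith)
  have hb : Real.sqrt (2*ν)^2 = 2*ν := Real.sq_sqrt (by linarith)
  have hga : g (Real.sqrt (ν/2)) ≤ 0 := by
    show p _ ≤ 0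
    rw [ha, hp]
    have t1 : (0:ℝ) ≤ (ν/2)*(1-ν/2)^2 := by positivity
    have t2 : (0:ℝ) ≤ (ν/2)^3*(1-ν/2) := mul_nonneg (by positivity) (by linarith)
    have t3 : (0:ℝ) ≤ (ν/2)^4 := by positivity
    simp only
    nlinarith [t1, t2, t3]
  have hgb : 0 ≤ g (Real.sqrt (2*ν)) := by
    show (0:ℝ) ≤ p _
    rw [hb, hp]
    have hbr : (1/2 : ℝ) ≤ (1-2*ν)^2 - 8*ν^2*(1-2*ν) - 16*ν^3 := by nlinarith
    have := mul_le_mul_of_nonneg_left hbr hν.le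
    simp only
    nlinarith [this]
  obtain ⟨x, hxmem, hgx⟩ := intermediate_value_Icc hle hcont ⟨hga, hgb⟩
  have hx1 : ν/2 ≤ x^2 := by
    calc ν/2 = Real.sqrt (ν/2)^2 := ha.symm
    _ ≤ x^2 := pow_le_pow_left₀ (Real.sqrt_nonneg _) hxmem.1 2
  have hxpos : 0 < x := lt_of_lt_of_le (Real.sqrt_pos.2 (by linarith)) hxmem.1
  have hx2 : x^2 ≤ 2*ν := by
    calc x^2 ≤ Real.sqrt (2*ν)^2 := pow_le_pow_left₀ hxpos.le hxmem.2 2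
    _ = 2*ν := hb
  have hden : (0:ℝ) < 1 - x^2 := by linarith
  set y : ℝ := x^4 / (1 - x^2) with hy
  have hynn : 0 ≤ y := div_nonneg (by positivity) hden.le
  have hyub : y ≤ ν := by
    rw [hy, div_le_iff₀ hden]
    nlinarith [sq_nonneg x, hx2, hν']
  have hgx0 : p (x^2) = 0 := hgx
  refine ⟨(x, y), mem_bp hν hx1 hx2 hxpos.le (by linarith) hyub, ?_⟩
  have hyeq : y * (1 - x^2) = x^4 := by
    rw [hy]; field_simp
  have hfirst : ν - x^2 + x^2*y + y^2 = 0 := by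
    have hne : (1 - x^2) ≠ 0 := ne_of_gt hden
    have expand : (ν - x^2 + x^2*y + y^2) * (1-x^2)^2 = 0 := by
      have e1 : x^2*y*(1-x^2)^2 = x^2*x^4*(1-x^2) := by
        rw [show x^2*y*(1-x^2)^2 = x^2*(y*(1-x^2))*(1-x^2) by ring, hyeq]
      have e2 : y^2*(1-x^2)^2 = x^4*x^4 := by
        rw [show y^2*(1-x^2)^2 = (y*(1-x^2))*(y*(1-x^2)) by ring, hyeq]
      rw [hp] at hgx0
      simp only at hgx0
      nlinarith [e1, e2, hgx0]
    have h2 : (1-x^2)^2 ≠ 0 := pow_ne_zero 2 hne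
    exact (mul_eq_zero.1 expand).resolve_right h2
  have hsecond : -y + x^2*y + x^4 = 0 := by linarith [hyeq, sq_nonneg x]
  simp only [F, Prod.mk.injEq]
  constructor
  · calc x * (ν - x ^ 2) + x ^ 3 * y + x * y ^ 2 = x * (ν - x^2 + x^2*y + y^2) := by ring
    _ = 0 := by rw [hfirst]; ring
  · linarith [hsecond]

/-- If `f T ≥ 0` and the derivative is positive whenever `f T = 0`, then
`f ≥ 0` slightly to the right of `T`. -/
lemma push {f : ℝ → ℝ} {c T : ℝ} (h : HasDerivAt f c T) (h0 : 0 ≤ f T)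
    (hc : f T = 0 → 0 < c) : ∀ᶠ s in nhdsWithin T (Ioi T), 0 ≤ f s := by
  rcases h0.lt_or_eq with hpos | heq
  · have : ∀ᶠ s in nhds T, 0 < f s := h.continuousAt.eventually (eventually_gt_nhds hpos)
    exact (this.filter_mono nhdsWithin_le_nhds).mono fun s hs => hs.le
  · have hcpos : 0 < c := hc heq.symm
    have hslope : Tendsto (slope f T) (nhdsWithin T (Ioi T)) (nhds c) :=
      (hasDerivAt_iff_tendsto_slope.1 h).mono_left
        (nhdsWithin_mono T (fun s hs => ne_of_gt hs))
    have hev : ∀ᶠ s in nhdsWithin T (Ioi T), 0 < slope f T s :=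
      hslope.eventually (eventually_gt_nhds hcpos)
    filter_upwards [hev, self_mem_nhdsWithin] with s hs hmem
    have hsT : T < s := hmem
    have : slope f T s = (f s - f T) / (s - T) := slope_def_field f T s
    rw [this, ← heq] at hs
    have := mul_pos hs (show (0:ℝ) < s - T by linarith)
    rw [div_mul_cancel₀] at this
    · linarith
    · linarith
  
/-- Forward invariance of Bp. -/
lemma invariant {ν : ℝ} (hν : 0 < ν) (hν' : ν ≤ 1/100) (z : ℝ → ℝ × ℝ)
    (hz : ∀ t ∈ Ici (0:ℝ), HasDerivAt z (F ν (z t)) t) (h0 : z 0 ∈ Bp ν) :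
    ∀ t ∈ Ici (0:ℝ), z t ∈ Bp ν := by
  have hcont : ContinuousOn z (Ici 0) := fun t ht =>
    (hz t ht).continuousAt.continuousWithinAt
  by_contra hbad
  push_neg at hbad
  obtain ⟨t₀, ht₀, ht₀bad⟩ := hbad
  set S : Set ℝ := {t | 0 ≤ t ∧ z t ∉ Bp ν} with hS
  have hSne : S.Nonempty := ⟨t₀, ht₀, ht₀bad⟩
  have hSbdd : BddBelow S := ⟨0, fun t ht => ht.1⟩
  set T : ℝ := sInf S with hT
  have hT0 : 0 ≤ T := le_csInf hSne fun t ht => ht.1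
  have hgood : ∀ s, 0 ≤ s → s < T → z s ∈ Bp ν := by
    intro s hs hsT
    by_contra h
    exact absurd (csInf_le hSbdd ⟨hs, h⟩) (not_le.2 hsT)
  have hzT : z T ∈ Bp ν := by
    rcases eq_or_lt_of_le hT0 with h | h
    · by_contra h'
      -- T = 0
      rw [← h] at h'
      exact h' h0
    · -- T > 0 : limit from the left
      have hne : (nhdsWithin T (Ico 0 T)).NeBot := by
        apply mem_closure_iff_nhdsWithin_neBot.1
        rw [closure_Ico (ne_of_lt h)]
        exact ⟨hT0, le_refl T⟩
      have htend : Tendsto z (nhdsWithin T (Ico 0 T)) (nhds (z T)) :=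
        (hcont T hT0).mono (show Ico (0:ℝ) T ⊆ Ici 0 from fun s hs => hs.1)
      have hev : ∀ᶠ s in nhdsWithin T (Ico 0 T), z s ∈ Bp ν := by
        filter_upwards [self_mem_nhdsWithin] with s hs
        exact hgood s hs.1 hs.2
      exact (isClosed_Icc.prod isClosed_Icc).mem_of_tendsto htend hev
  -- z T ∈ Bp: derive eventual membership to the right
  obtain ⟨hxpos, hx1, hx2, hy1, hy2⟩ := bp_facts hν hzT
  have ha : Real.sqrt (ν/2)^2 = ν/2 := Real.sq_sqrt (by linarith)
  have hb : Real.sqrt (2*ν)^2 = 2*ν := Real.sq_sqrt (by linarith)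
  have hTmem : T ∈ Ici (0:ℝ) := hT0
  have hdz := hz T hTmem
  have hdx : HasDerivAt (fun t => (z t).1) ((F ν (z T)).1) T := hdz.fst
  have hdy : HasDerivAt (fun t => (z t).2) ((F ν (z T)).2) T := hdz.snd
  set x := (z T).1
  set y := (z T).2
  -- four constraints
  have e1 : ∀ᶠ s in nhdsWithin T (Ioi T), 0 ≤ (z s).1 - Real.sqrt (ν/2) := by
    apply push (hdx.sub_const _)
    · exact sub_nonneg.2 hzT.1.1
    · intro hzero
      have hxeq : x = Real.sqrt (ν/2) := by linarith [sub_eq_zero.1 hzero]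
      have hx2eq : x^2 = ν/2 := by rw [hxeq, ha]
      show 0 < x * (ν - x^2) + x^3*y + x*y^2
      have : x * (ν - x^2) + x^3*y + x*y^2 = x * (ν/2 + x^2*y + y^2) := by
        rw [show x^3*y = x*(x^2*y) by ring]; nlinarith [hx2eq]
      rw [this]
      apply mul_pos hxpos
      nlinarith [sq_nonneg y, hx2eq]
  have e2 : ∀ᶠ s in nhdsWithin T (Ioi T), 0 ≤ Real.sqrt (2*ν) - (z s).1 := by
    apply push ((hasDerivAt_const T _).sub hdx)
    · exact sub_nonneg.2 hzT.1.2
    · intro hzero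
      have hxeq : x = Real.sqrt (2*ν) := by linarith [sub_eq_zero.1 hzero]
      have hx2eq : x^2 = 2*ν := by rw [hxeq, hb]
      show 0 < 0 - (x * (ν - x^2) + x^3*y + x*y^2)
      have : x * (ν - x^2) + x^3*y + x*y^2 = x * (-ν + x^2*y + y^2) := by
        rw [show x^3*y = x*(x^2*y) by ring]; nlinarith [hx2eq]
      rw [this]
      have : x * (-ν + x^2*y + y^2) < 0 := by
        apply mul_neg_of_pos_of_neg hxpos
        nlinarith [sq_nonneg y, hx2eq]
      linarith
  have e3 : ∀ᶠ s in nhdsWithin T (Ioi T), 0 ≤ (z s).2 - (-ν) := by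
    apply push (hdy.sub_const _)
    · exact sub_nonneg.2 hzT.2.1
    · intro hzero
      have hyeq : y = -ν := by linarith [sub_eq_zero.1 hzero]
      show 0 < -y + x^2*y + x^4
      rw [hyeq]
      nlinarith [sq_nonneg (x^2)]
  have e4 : ∀ᶠ s in nhdsWithin T (Ioi T), 0 ≤ ν - (z s).2 := by
    apply push ((hasDerivAt_const T _).sub hdy)
    · exact sub_nonneg.2 hzT.2.2
    · intro hzero
      have hyeq : y = ν := by linarith [sub_eq_zero.1 hzero]
      show 0 < 0 - (-y + x^2*y + x^4)
      rw [hyeq]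
      nlinarith [sq_nonneg (x^2)]
  have hall : ∀ᶠ s in nhdsWithin T (Ioi T), z s ∈ Bp ν := by
    filter_upwards [e1, e2, e3, e4] with s h1 h2 h3 h4
    exact ⟨⟨by linarith, by linarith⟩, by linarith, by linarith⟩
  rw [eventually_iff, mem_nhdsGT_iff_exists_Ioc_subset] at hall
  obtain ⟨u, hu, hsub⟩ := hall
  -- now every point of S is > u, contradicting T = sInf S
  obtain ⟨t, htS, htu⟩ := exists_lt_of_csInf_lt hSne (show sInf S < min u (T+1) by
    rw [← hT]; exact lt_min hu (by linarith))
  have htT : T ≤ t := csInf_le hSbdd htS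
  rcases eq_or_lt_of_le htT with h | h
  · exact htS.2 (h ▸ hzT)
  · have : z t ∈ Bp ν := hsub ⟨h, le_of_lt (lt_of_lt_of_le htu (min_le_left _ _))⟩
    exact htS.2 this

lemma hasDerivAt_fst {z : ℝ → ℝ × ℝ} {v : ℝ × ℝ} {t : ℝ} (h : HasDerivAt z v t) :
    HasDerivAt (fun s => (z s).1) v.1 t := by
  have := ((ContinuousLinearMap.fst ℝ ℝ ℝ).hasFDerivAt.comp t h.hasFDerivAt).hasDerivAt
  exact h.fst

lemma hasDerivAt_snd {z : ℝ → ℝ × ℝ} {v : ℝ × ℝ} {t : ℝ} (h : HasDerivAt z v t) :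
    HasDerivAt (fun s => (z s).2) v.2 t := by
  have := ((ContinuousLinearMap.snd ℝ ℝ ℝ).hasFDerivAt.comp t h.hasFDerivAt).hasDerivAt
  exact h.snd

lemma converge {ν : ℝ} (hν : 0 < ν) (hν' : ν ≤ 1/100) (u : ℝ × ℝ)
    (hu : u ∈ Bp ν) (hFu : F ν u = (0, 0)) (z : ℝ → ℝ × ℝ)
    (hz : ∀ t ∈ Ici (0:ℝ), HasDerivAt z (F ν (z t)) t) (h0 : z 0 ∈ Bp ν) :
    Tendsto z atTop (nhds u) := by
  have hinv := invariant hν hν' z hz h0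
  set r : ℝ → ℝ := fun t => ((z t).1 - u.1)^2 + ((z t).2 - u.2)^2 with hrdef
  set rd : ℝ → ℝ := fun t =>
    2*((z t).1 - u.1)*(F ν (z t)).1 + 2*((z t).2 - u.2)*(F ν (z t)).2 with hrddef
  have hFu1 : (F ν u).1 = 0 := by rw [hFu]
  have hFu2 : (F ν u).2 = 0 := by rw [hFu]
  have hr : ∀ t ∈ Ici (0:ℝ), HasDerivAt r (rd t) t := by
    intro t ht
    have hdz := hz t ht
    have h1 : HasDerivAt (fun s => ((z s).1 - u.1)^2)
        (2*((z t).1 - u.1)*(F ν (z t)).1) t := by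
      have := ((hasDerivAt_fst hdz).sub_const u.1).pow 2
      exact this.congr_deriv (by ring)
    have h2 : HasDerivAt (fun s => ((z s).2 - u.2)^2)
        (2*((z t).2 - u.2)*(F ν (z t)).2) t := by
      have := ((hasDerivAt_snd hdz).sub_const u.2).pow 2
      exact this.congr_deriv (by ring)
    exact h1.add h2
  have hrle : ∀ t ∈ Ici (0:ℝ), rd t ≤ -(ν/4) * r t := by
    intro t ht
    obtain ⟨hx1, hx2, hx3, hy1, hy2⟩ := bp_facts hν (hinv t ht)
    obtain ⟨hux1, hux2, hux3, huy1, huy2⟩ := bp_facts hν hu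
    have hk := key ν (z t).1 (z t).2 u.1 u.2 hν hν' hx2 hx3 hy1 hy2 hux2 hux3 huy1 huy2 hx1 hux1
    have hG1 : (u.1 * (ν - u.1 ^ 2) + u.1 ^ 3 * u.2 + u.1 * u.2 ^ 2) = 0 := hFu1
    have hG2 : (-u.2 + u.1 ^ 2 * u.2 + u.1 ^ 4) = 0 := hFu2
    have m1 : ((z t).1 - u.1) * (u.1 * (ν - u.1 ^ 2) + u.1 ^ 3 * u.2 + u.1 * u.2 ^ 2) = 0 := by
      rw [hG1]; ring
    have m2 : ((z t).2 - u.2) * (-u.2 + u.1 ^ 2 * u.2 + u.1 ^ 4) = 0 := by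
      rw [hG2]; ring
    show 2*((z t).1 - u.1)*(F ν (z t)).1 + 2*((z t).2 - u.2)*(F ν (z t)).2
      ≤ -(ν/4) * (((z t).1 - u.1)^2 + ((z t).2 - u.2)^2)
    have hF1 : (F ν (z t)).1 = (z t).1 * (ν - (z t).1 ^ 2) + (z t).1 ^ 3 * (z t).2 + (z t).1 * (z t).2 ^ 2 := rfl
    have hF2 : (F ν (z t)).2 = -(z t).2 + (z t).1 ^ 2 * (z t).2 + (z t).1 ^ 4 := rfl
    rw [hF1, hF2]
    nlinarith [hk, m1, m2]
  -- Gronwall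
  have hc : (0:ℝ) < ν/4 := by linarith
  set g : ℝ → ℝ := fun t => Real.exp (ν/4*t) * r t with hgdef
  have hg : ∀ t ∈ Ici (0:ℝ), HasDerivAt g (Real.exp (ν/4*t) * (ν/4 * r t + rd t)) t := by
    intro t ht
    have hlin : HasDerivAt (fun s : ℝ => ν/4 * s) (ν/4) t := by
      simpa using (hasDerivAt_id t).const_mul (ν/4)
    have := hlin.exp.mul (hr t ht)
    exact this.congr_deriv (by ring)
  have hganti : AntitoneOn g (Ici 0) := by
    apply antitoneOn_of_deriv_nonpos (convex_Ici 0)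
    · exact fun t ht => (hg t ht).continuousAt.continuousWithinAt
    · intro t ht
      rw [interior_Ici] at ht
      exact (hg t (mem_Ici.2 (le_of_lt ht))).differentiableAt.differentiableWithinAt
    · intro t ht
      rw [interior_Ici] at ht
      rw [(hg t (mem_Ici.2 (le_of_lt ht))).deriv]
      have h1 := hrle t (mem_Ici.2 (le_of_lt ht))
      have h2 : 0 ≤ r t := by positivity
      have h3 : ν/4 * r t + rd t ≤ 0 := by linarith [h1]
      exact mul_nonpos_of_nonneg_of_nonpos (Real.exp_pos _).le h3
  have hbound : ∀ t ∈ Ici (0:ℝ), r t ≤ r 0 * Real.exp (-(ν/4*t)) := by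
    intro t ht
    have h := hganti self_mem_Ici ht ht
    rw [hgdef] at h
    simp only [mul_zero, Real.exp_zero, one_mul] at h
    have hepos := Real.exp_pos (ν/4*t)
    rw [Real.exp_neg, ← div_eq_mul_inv, le_div_iff₀ hepos]
    nlinarith [h]
  have hrpos : ∀ t, 0 ≤ r t := fun t => by positivity
  have htend0 : Tendsto r atTop (nhds 0) := by
    have hct : Tendsto (fun t : ℝ => ν/4 * t) atTop atTop :=
      Tendsto.const_mul_atTop hc tendsto_id
    have hexp : Tendsto (fun t : ℝ => Real.exp (-(ν/4*t))) atTop (nhds 0) :=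
      Real.tendsto_exp_neg_atTop_nhds_zero.comp hct
    have hub : Tendsto (fun t : ℝ => r 0 * Real.exp (-(ν/4*t))) atTop (nhds 0) := by
      simpa using hexp.const_mul (r 0)
    apply squeeze_zero' ?_ ?_ hub
    · filter_upwards [eventually_ge_atTop (0:ℝ)] with t ht
      exact hrpos t
    · filter_upwards [eventually_ge_atTop (0:ℝ)] with t ht
      exact hbound t ht
  -- from r → 0 deduce componentwise convergence
  have h1sq : Tendsto (fun t => ((z t).1 - u.1)^2) atTop (nhds 0) := by
    apply squeeze_zero' ?_ ?_ htend0
    · exact Eventually.of_forall fun t => sq_nonneg _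
    · refine Eventually.of_forall fun t => ?_
      simp only [hrdef]
      nlinarith [sq_nonneg ((z t).2 - u.2)]
  have h2sq : Tendsto (fun t => ((z t).2 - u.2)^2) atTop (nhds 0) := by
    apply squeeze_zero' ?_ ?_ htend0
    · exact Eventually.of_forall fun t => sq_nonneg _
    · refine Eventually.of_forall fun t => ?_
      simp only [hrdef]
      nlinarith [sq_nonneg ((z t).1 - u.1)]
  have habs1 : Tendsto (fun t => |(z t).1 - u.1|) atTop (nhds 0) := by
    have := (Real.continuous_sqrt.tendsto 0).comp h1sq
    simp only [Function.comp_def, Real.sqrt_sq_eq_abs, Real.sqrt_zero] at this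
    exact this
  have habs2 : Tendsto (fun t => |(z t).2 - u.2|) atTop (nhds 0) := by
    have := (Real.continuous_sqrt.tendsto 0).comp h2sq
    simp only [Function.comp_def, Real.sqrt_sq_eq_abs, Real.sqrt_zero] at this
    exact this
  have hz1 : Tendsto (fun t => (z t).1) atTop (nhds u.1) := by
    have : Tendsto (fun t => (z t).1 - u.1) atTop (nhds 0) :=
      squeeze_zero_norm (fun t => le_of_eq (Real.norm_eq_abs _)) habs1
    have := this.add_const u.1
    simpa using this
  have hz2 : Tendsto (fun t => (z t).2) atTop (nhds u.2) := by
    have : Tendsto (fun t => (z t).2 - u.2) atTop (nhds 0) :=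
      squeeze_zero_norm (fun t => le_of_eq (Real.norm_eq_abs _)) habs2
    have := this.add_const u.2
    simpa using this
  have : Tendsto (fun t => ((z t).1, (z t).2)) atTop (nhds (u.1, u.2)) :=
    hz1.prodMk_nhds hz2
  simpa using this


set_option maxHeartbeats 1000000 in
/-- uniqueness of the zero inside Bp -/
lemma equil_unique {ν : ℝ} (hν : 0 < ν) (hν' : ν ≤ 1/100) {u v : ℝ × ℝ}
    (hu : u ∈ Bp ν) (hv : v ∈ Bp ν) (hFu : F ν u = (0,0)) (hFv : F ν v = (0,0)) :
    u = v := by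
  obtain ⟨hx1, hx2, hx3, hy1, hy2⟩ := bp_facts hν hu
  obtain ⟨hvx1, hvx2, hvx3, hvy1, hvy2⟩ := bp_facts hν hv
  have hk := key ν u.1 u.2 v.1 v.2 hν hν' hx2 hx3 hy1 hy2 hvx2 hvx3 hvy1 hvy2 hx1 hvx1
  rw [F, Prod.mk.injEq] at hFu hFv
  obtain ⟨e1, e2⟩ := hFu
  obtain ⟨e3, e4⟩ := hFv
  rw [e1, e2, e3, e4] at hk
  simp only [sub_zero, zero_mul, zero_sub, neg_zero] at hk
  have hsq : (u.1 - v.1)^2 + (u.2 - v.2)^2 ≤ 0 := by nlinarith [hk]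
  have h1 : u.1 = v.1 := by nlinarith [sq_nonneg (u.1 - v.1), sq_nonneg (u.2 - v.2)]
  have h2 : u.2 = v.2 := by nlinarith [sq_nonneg (u.1 - v.1), sq_nonneg (u.2 - v.2)]
  exact Prod.ext h1 h2

/-- the reflection symmetry -/
lemma F_reflect (ν : ℝ) (p : ℝ × ℝ) :
    F ν (-p.1, p.2) = (-(F ν p).1, (F ν p).2) := by
  simp only [F, Prod.mk.injEq]
  constructor <;> ring

lemma mem_bm_iff {ν : ℝ} (p : ℝ × ℝ) : p ∈ Bm ν ↔ (-p.1, p.2) ∈ Bp ν := by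
  simp only [Bm, Bp, Set.mem_prod, Set.mem_Icc]
  constructor
  · rintro ⟨⟨h1, h2⟩, h3⟩
    exact ⟨⟨by linarith, by linarith⟩, h3⟩
  · rintro ⟨⟨h1, h2⟩, h3⟩
    exact ⟨⟨by linarith, by linarith⟩, h3⟩


/-- There exists `ν₊ > 0` such that for every `ν ∈ (0, ν₊]` there exist unique zeros
`u₊ ∈ B_ν⁺` and `u₋ ∈ B_ν⁻` of `F_ν`, and every solution starting in `B_ν⁺`
(resp. `B_ν⁻`) converges to `u₊` (resp. `u₋`) as `t → ∞`. -/
theorem stmt8 :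
    ∃ νp : ℝ, 0 < νp ∧ ∀ ν ∈ Ioc (0 : ℝ) νp,
      (∃ up ∈ Bp ν, F ν up = (0, 0) ∧
        (∀ u ∈ Bp ν, F ν u = (0, 0) → u = up) ∧
        (∀ z : ℝ → ℝ × ℝ,
          (∀ t ∈ Ici (0 : ℝ), HasDerivAt z (F ν (z t)) t) →
          z 0 ∈ Bp ν → Filter.Tendsto z Filter.atTop (nhds up))) ∧
      (∃ um ∈ Bm ν, F ν um = (0, 0) ∧
        (∀ u ∈ Bm ν, F ν u = (0, 0) → u = um) ∧
        (∀ z : ℝ → ℝ × ℝ,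
          (∀ t ∈ Ici (0 : ℝ), HasDerivAt z (F ν (z t)) t) →
          z 0 ∈ Bm ν → Filter.Tendsto z Filter.atTop (nhds um))) := by
  refine ⟨1/100, by norm_num, fun ν hν => ?_⟩
  obtain ⟨hν0, hν1⟩ := hν
  obtain ⟨up, hup, hFup⟩ := equil_exists hν0 hν1
  constructor
  · exact ⟨up, hup, hFup,
      fun u hu hFu => equil_unique hν0 hν1 hu hup hFu hFup,
      fun z hz h0 => converge hν0 hν1 up hup hFup z hz h0⟩
  · refine ⟨(-up.1, up.2), ?_, ?_, ?_, ?_⟩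
    · rw [mem_bm_iff]
      simpa using hup
    · have := F_reflect ν up
      rw [hFup] at this
      simpa using this
    · intro u hu hFu
      rw [mem_bm_iff] at hu
      have hFru : F ν (-u.1, u.2) = (0, 0) := by
        rw [F_reflect, hFu]
        simp
      have heq := equil_unique hν0 hν1 hu hup hFru hFup
      rw [Prod.ext_iff] at heq
      obtain ⟨h1, h2⟩ := heq
      simp only at h1 h2
      rw [Prod.ext_iff]
      constructor
      · simp only
        linarith
      · simpa using h2
    · intro z hz h0
      set w : ℝ → ℝ × ℝ := fun t => (-(z t).1, (z t).2) with hwdef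
      have hw : ∀ t ∈ Ici (0:ℝ), HasDerivAt w (F ν (w t)) t := by
        intro t ht
        have hdz := hz t ht
        have h1 : HasDerivAt (fun s => -(z s).1) (-(F ν (z t)).1) t :=
          (hasDerivAt_fst hdz).neg
        have h2 : HasDerivAt (fun s => (z s).2) ((F ν (z t)).2) t :=
          hasDerivAt_snd hdz
        have := h1.prodMk h2
        rw [hwdef]
        simp only
        rw [show F ν (-(z t).1, (z t).2) = (-(F ν (z t)).1, (F ν (z t)).2) from F_reflect ν (z t)]
        exact this
      have hw0 : w 0 ∈ Bp ν := by
        rw [hwdef]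
        simp only
        exact (mem_bm_iff (z 0)).1 h0
      have hlim := converge hν0 hν1 up hup hFup w hw hw0
      have hcontref : Continuous (fun p : ℝ × ℝ => (-p.1, p.2)) :=
        (continuous_fst.neg).prodMk continuous_snd
      have := (hcontref.tendsto up).comp hlim
      have hzw : z = fun t => (-(w t).1, (w t).2) := by
        funext t
        rw [hwdef]
        simp
      rw [hzw]
      exact this
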